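/- arXiv:1010.5280 — 2 statements merged into one kernel-verified Lean document; each statement's English description precedes it below -/
import Mathlib

section
/- Let p be a nonzero polynomial with complex coefficients and let ξ ∈ ℂ be a root of p of multiplicity m (so m = rootMultiplicity of ξ in p, m ≥ 1). Then the difference quotient of the Newton map at ξ tends to (m−1)/m: the function z ↦ (N_p(z) − ξ)/(z − ξ) tends to ((m : ℂ) − 1)/m as z → ξ along the punctured neighborhood filter 𝓝[≠] ξ. In particular, each root of p of multiplicity m is a fixed point of N_p with multiplier (m−1)/m, hence attracting. -/
/-- The Newton map of a polynomial `p`: `N_p(z) = z - p(z)/p'(z)`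
(with the convention that division by zero yields 0, so `N_p(z) = z` when `p'(z) = 0`). -/
noncomputable def NewtonMap (p : Polynomial ℂ) (z : ℂ) : ℂ :=
  z - Polynomial.eval z p / Polynomial.eval z (Polynomial.derivative p)

/-- A root of `p` of multiplicity `m ≥ 1` is a fixed point of the Newton map with
multiplier `(m-1)/m`: the difference quotient of `N_p` at `ξ` tends to `(m-1)/m`
as `z → ξ` along the punctured neighborhood filter. -/
theorem newtonMap_multiplier_at_root (p : Polynomial ℂ) (hp : p ≠ 0) (ξ : ℂ) (m : ℕ)
    (hm : m = p.rootMultiplicity ξ) (hm1 : 1 ≤ m) :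
    Filter.Tendsto (fun z => (NewtonMap p z - ξ) / (z - ξ)) (nhdsWithin ξ {ξ}ᶜ)
      (nhds (((m : ℂ) - 1) / m)) := by
  obtain ⟨k, rfl⟩ : ∃ k, m = k + 1 := ⟨m - 1, by omega⟩
  set q := p /ₘ (Polynomial.X - Polynomial.C ξ) ^ (k + 1) with hq
  have hqξ : q.eval ξ ≠ 0 := by
    rw [hq, hm]; exact Polynomial.eval_divByMonic_pow_rootMultiplicity_ne_zero ξ hp
  have hfac : (Polynomial.X - Polynomial.C ξ) ^ (k + 1) * q = p := by
    rw [hq, hm]; exact Polynomial.pow_mul_divByMonic_rootMultiplicity_eq p ξ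
  have hm0 : ((k : ℂ) + 1) ≠ 0 := by
    have := Nat.cast_ne_zero (R := ℂ).mpr (Nat.succ_ne_zero k)
    push_cast at this
    exact this
  set g : ℂ → ℂ := fun z =>
    ((k : ℂ) + 1) * q.eval z + (z - ξ) * (Polynomial.derivative q).eval z with hg
  have hgξ : g ξ ≠ 0 := by
    simp only [hg, sub_self, zero_mul, add_zero]
    exact mul_ne_zero hm0 hqξ
  have hgcont : Continuous g :=
    (continuous_const.mul q.continuous).add
      ((continuous_id.sub continuous_const).mul (Polynomial.derivative q).continuous)
  have hderiv : ∀ z : ℂ, (Polynomial.derivative p).eval z = (z - ξ) ^ k * g z := by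
    intro z
    rw [← hfac, Polynomial.derivative_mul, Polynomial.derivative_pow,
      Polynomial.derivative_X_sub_C]
    simp only [Polynomial.eval_add, Polynomial.eval_mul, Polynomial.eval_pow,
      Polynomial.eval_sub, Polynomial.eval_X, Polynomial.eval_C, Polynomial.eval_natCast,
      Polynomial.eval_one, mul_one, Nat.add_sub_cancel, hg]
    push_cast
    ring
  have hpz : ∀ z : ℂ, p.eval z = (z - ξ) ^ (k + 1) * q.eval z := by
    intro z
    rw [← hfac]
    simp [Polynomial.eval_pow]
  have hev : ∀ᶠ z in nhdsWithin ξ {ξ}ᶜ,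
      (NewtonMap p z - ξ) / (z - ξ) = 1 - q.eval z / g z := by
    have hgne : ∀ᶠ z in nhdsWithin ξ {ξ}ᶜ, g z ≠ 0 :=
      Filter.Eventually.filter_mono nhdsWithin_le_nhds
        (hgcont.continuousAt.eventually_ne hgξ)
    filter_upwards [hgne, self_mem_nhdsWithin] with z hgz hz
    have hzξ : z - ξ ≠ 0 := sub_ne_zero.mpr hz
    have hpow : (z - ξ) ^ k ≠ 0 := pow_ne_zero _ hzξ
    have hratio : p.eval z / (Polynomial.derivative p).eval z
        = (z - ξ) * q.eval z / g z := by
      rw [hpz z, hderiv z, pow_succ]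
      field_simp
    unfold NewtonMap
    rw [hratio]
    field_simp
    ring
  rw [Filter.tendsto_congr' hev]
  have hval : 1 - q.eval ξ / g ξ = (((k : ℂ) + 1) - 1) / ((k : ℂ) + 1) := by
    simp only [hg, sub_self, zero_mul, add_zero]
    field_simp
  have hlim : Filter.Tendsto (fun z => 1 - q.eval z / g z) (nhdsWithin ξ {ξ}ᶜ)
      (nhds (1 - q.eval ξ / g ξ)) :=
    Filter.Tendsto.mono_left
      ((continuous_const.continuousAt).sub
        ((q.continuous.continuousAt).div hgcont.continuousAt hgξ)) nhdsWithin_le_nhds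
  rw [hval] at hlim
  convert hlim using 2 <;> push_cast <;> ring
end

section
/- Let p be a polynomial with complex coefficients of degree d ≥ 1. Then N_p(z)/z tends to ((d : ℂ) − 1)/d as z → ∞, i.e., the function z ↦ N_p(z)/z tends to ((d : ℂ) − 1)/d along the cobounded filter on ℂ. (This expresses that ∞ is a fixed point of the Newton map with multiplier d/(d−1); for d ≥ 2 this multiplier has modulus greater than 1, so ∞ is a repelling fixed point, as required in Definition 1.1 of a Newton map.) -/
open Polynomial Filter

lemma eventually_ne_zero_cobounded :
    ∀ᶠ z : ℂ in Bornology.cobounded ℂ, z ≠ 0 := by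
  filter_upwards [(tendsto_norm_cobounded_atTop (E := ℂ)).eventually_ge_atTop 1] with z hz
  intro h
  simp [h] at hz
  linarith

lemma tendsto_eval_div_pow (q : Polynomial ℂ) (n : ℕ) (hq : q.natDegree ≤ n) :
    Filter.Tendsto (fun z : ℂ => q.eval z / z ^ n) (Bornology.cobounded ℂ)
      (nhds (q.coeff n)) := by
  have hzero : Filter.Tendsto (fun z : ℂ => z⁻¹) (Bornology.cobounded ℂ) (nhds 0) := by
    rw [tendsto_zero_iff_norm_tendsto_zero]
    simpa [norm_inv, Pi.inv_def] using (tendsto_norm_cobounded_atTop (E := ℂ)).inv_tendsto_atTop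
  have hpow : ∀ k : ℕ, 1 ≤ k →
      Filter.Tendsto (fun z : ℂ => (z ^ k)⁻¹) (Bornology.cobounded ℂ) (nhds 0) := by
    intro k hk
    have h0 : (0:ℂ) ^ k = 0 := zero_pow (by omega)
    simpa [inv_pow, h0] using hzero.pow k
  have hsum : Filter.Tendsto
      (fun z : ℂ => ∑ i ∈ Finset.range (n + 1), q.coeff i * (z ^ (n - i))⁻¹)
      (Bornology.cobounded ℂ)
      (nhds (∑ i ∈ Finset.range (n + 1), if i = n then q.coeff n else 0)) := by
    apply tendsto_finset_sum
    intro i hi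
    rcases eq_or_ne i n with rfl | hne
    · simpa using tendsto_const_nhds
    · have hk : 1 ≤ n - i := by
        have := Finset.mem_range.mp hi; omega
      rw [if_neg hne]
      simpa using tendsto_const_nhds.mul (hpow _ hk)
  have hval : (∑ i ∈ Finset.range (n + 1), if i = n then q.coeff n else 0) = q.coeff n := by
    simp
  rw [hval] at hsum
  apply hsum.congr'
  filter_upwards [eventually_ne_zero_cobounded] with z hz
  rw [eval_eq_sum_range' (Nat.lt_succ_of_le hq), Finset.sum_div]
  apply Finset.sum_congr rfl
  intro i hi
  have hle : i ≤ n := Nat.lt_succ_iff.mp (Finset.mem_range.mp hi)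
  have hzn : z ^ n = z ^ (n - i) * z ^ i := by
    rw [← pow_add]; congr 1; omega
  rw [hzn]
  field_simp

/-- For a polynomial `p` of degree `d ≥ 1`, the Newton map satisfies
`N_p(z)/z → (d-1)/d` as `z → ∞` (along the cobounded filter on `ℂ`);
`∞` is a fixed point of `N_p` with multiplier `d/(d-1)`. -/
theorem newtonMap_tendsto_at_infinity (p : Polynomial ℂ) (d : ℕ)
    (hd : d = p.natDegree) (hd1 : 1 ≤ d) :
    Filter.Tendsto (fun z => NewtonMap p z / z) (Bornology.cobounded ℂ)
      (nhds (((d : ℂ) - 1) / d)) := by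
  have hp0 : p ≠ 0 := by
    intro h
    rw [h] at hd
    simp at hd
    omega
  have hlc : p.coeff d ≠ 0 := by
    rw [hd]
    exact Polynomial.coeff_ne_zero_of_eq_degree (degree_eq_natDegree hp0)
  have hdC : (d : ℂ) ≠ 0 := Nat.cast_ne_zero.mpr (by omega)
  have hA := tendsto_eval_div_pow p d hd.ge
  have hder : (Polynomial.derivative p).natDegree ≤ d - 1 := by
    rw [hd]; exact natDegree_derivative_le p
  have hB := tendsto_eval_div_pow (Polynomial.derivative p) (d - 1) hder
  have hcoeffB : (Polynomial.derivative p).coeff (d - 1) = p.coeff d * d := by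
    rw [Polynomial.coeff_derivative, show d - 1 + 1 = d from by omega]
    push_cast [Nat.cast_sub hd1]
    ring
  rw [hcoeffB] at hB
  have hBne : p.coeff d * (d : ℂ) ≠ 0 := mul_ne_zero hlc hdC
  have hdiv := hA.div hB hBne
  -- limit value : coeff d / (coeff d * d) = 1/d
  have hlim : p.coeff d / (p.coeff d * d) = 1 / (d : ℂ) := by
    field_simp
  rw [hlim] at hdiv
  have hdiv' : Filter.Tendsto (fun z : ℂ => p.eval z / (z * (Polynomial.derivative p).eval z))
      (Bornology.cobounded ℂ) (nhds (1 / (d : ℂ))) := by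
    apply hdiv.congr'
    filter_upwards [eventually_ne_zero_cobounded] with z hz
    simp only [Pi.div_apply]
    rcases eq_or_ne ((Polynomial.derivative p).eval z) 0 with h0 | h0
    · simp [h0]
    · have hzd : z ^ d = z * z ^ (d - 1) := by
        rw [← pow_succ']; congr 1; omega
      field_simp
      rw [hzd]; ring
  have hfinal := (tendsto_const_nhds (x := (1:ℂ))).sub hdiv'
  have hval : (1 : ℂ) - 1 / d = ((d : ℂ) - 1) / d := by
    field_simp
  rw [hval] at hfinal
  apply hfinal.congr'
  filter_upwards [eventually_ne_zero_cobounded] with z hz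
  unfold NewtonMap
  rw [sub_div, div_self hz, div_div, mul_comm]
end
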